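/- Let N ∈ ℕ and let t_i = -1 + (i-2)/N for i = 1,…,2N+3 (a uniform mesh on [-1-1/N, 1+1/N]). Define δ_i(u) = N(σ(u - t_{i-1}) - 2σ(u - t_i) + σ(u - t_{i+1})) for i = 2,…,2N+2, where σ(u) = max{u,0}, and L_t(f)(u) = ∑_{i=2}^{2N+2} f(t_i) δ_i(u). Then for every continuous function g on [-1,1], ‖L_t(g)‖_{C[-1,1]} ≤ ‖g‖_{C[-1,1]}. -/

import Mathlib

/-- The ReLU function. -/
def relu (u : ℝ) : ℝ := max u 0

/-- The uniform mesh points `t_i = -1 + (i-2)/N`. -/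
noncomputable def meshT (N i : ℕ) : ℝ := -1 + ((i : ℝ) - 2) / N

/-- The hat functions `δ_i(u) = N(σ(u-t_{i-1}) - 2σ(u-t_i) + σ(u-t_{i+1}))`. -/
noncomputable def hatDelta (N i : ℕ) (u : ℝ) : ℝ :=
  N * (relu (u - meshT N (i - 1)) - 2 * relu (u - meshT N i) + relu (u - meshT N (i + 1)))

/-- The quasi-interpolation operator `L_t(f)(u) = ∑_{i=2}^{2N+2} f(t_i) δ_i(u)`. -/
noncomputable def Lt (N : ℕ) (f : ℝ → ℝ) (u : ℝ) : ℝ :=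
  ∑ i ∈ Finset.Icc 2 (2 * N + 2), f (meshT N i) * hatDelta N i u

lemma relu_nonneg (x : ℝ) : 0 ≤ relu x := le_max_right _ _

lemma le_relu (x : ℝ) : x ≤ relu x := le_max_left _ _

lemma relu_convex (a h : ℝ) (hh : 0 ≤ h) : 2 * relu a ≤ relu (a + h) + relu (a - h) := by
  rcases le_total a 0 with h1 | h1
  · have : relu a = 0 := max_eq_right h1
    rw [this]
    nlinarith [relu_nonneg (a + h), relu_nonneg (a - h)]
  · have h0 : relu a = a := max_eq_left h1
    have h2 : relu (a + h) = a + h := max_eq_left (by linarith)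
    have := le_relu (a - h)
    rw [h0, h2]; linarith

lemma hatDelta_nonneg (N i : ℕ) (hi : 1 ≤ i) (u : ℝ) : 0 ≤ hatDelta N i u := by
  have hm1 : meshT N (i - 1) = meshT N i - 1 / N := by
    unfold meshT
    rw [Nat.cast_sub hi]
    push_cast
    ring
  have hp1 : meshT N (i + 1) = meshT N i + 1 / N := by
    unfold meshT
    push_cast
    ring
  unfold hatDelta
  rw [hm1, hp1]
  apply mul_nonneg (Nat.cast_nonneg N)
  have := relu_convex (u - meshT N i) (1 / N) (by positivity)
  have e1 : u - (meshT N i - 1 / N) = (u - meshT N i) + 1 / N := by ring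
  have e2 : u - (meshT N i + 1 / N) = (u - meshT N i) - 1 / N := by ring
  rw [e1, e2]
  linarith

lemma sum_hatDelta (N : ℕ) (hN : 1 ≤ N) (u : ℝ) (hu : u ∈ Set.Icc (-1 : ℝ) 1) :
    ∑ i ∈ Finset.Icc 2 (2 * N + 2), hatDelta N i u = 1 := by
  obtain ⟨hu1, hu2⟩ := hu
  have hN0 : (0 : ℝ) < N := by exact_mod_cast hN
  set F : ℕ → ℝ := fun j => (N : ℝ) * relu (u - meshT N j) with hF
  set G : ℕ → ℝ := fun k => F (k + 2) - F (k + 1) with hG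
  have key : ∀ i ∈ Finset.Icc 2 (2 * N + 2), hatDelta N i u = G (i - 1) - G (i - 2) := by
    intro i hi
    rw [Finset.mem_Icc] at hi
    obtain ⟨h2, _⟩ := hi
    have e1 : i - 1 + 2 = i + 1 := by omega
    have e2 : i - 1 + 1 = i := by omega
    have e3 : i - 2 + 2 = i := by omega
    have e4 : i - 2 + 1 = i - 1 := by omega
    simp only [hG, hF, e1, e2, e3, e4]
    unfold hatDelta
    ring
  rw [Finset.sum_congr rfl key, ← Finset.Ico_add_one_right_eq_Icc, Finset.sum_Ico_eq_sum_range]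
  have e5 : 2 * N + 2 + 1 - 2 = 2 * N + 1 := by omega
  rw [e5]
  have e6 : ∀ k, 2 + k - 1 = k + 1 := by omega
  have e7 : ∀ k, 2 + k - 2 = k := by omega
  simp only [e6, e7]
  rw [Finset.sum_range_sub G (2 * N + 1)]
  -- Now compute G (2N+1) - G 0 = (F (2N+3) - F (2N+2)) - (F 2 - F 1)
  have hpos : (0 : ℝ) < 1 / N := by positivity
  have hF1 : F 1 = (N : ℝ) * (u + 1) + 1 := by
    have hm : meshT N 1 = -1 - 1 / N := by unfold meshT; push_cast; ring
    have hr : relu (u - meshT N 1) = u - meshT N 1 :=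
      max_eq_left (by rw [hm]; linarith)
    show (N : ℝ) * relu (u - meshT N 1) = _
    rw [hr, hm]
    field_simp
    ring
  have hF2 : F 2 = (N : ℝ) * (u + 1) := by
    have hm : meshT N 2 = -1 := by unfold meshT; push_cast; ring
    have hr : relu (u - meshT N 2) = u - meshT N 2 :=
      max_eq_left (by rw [hm]; linarith)
    show (N : ℝ) * relu (u - meshT N 2) = _
    rw [hr, hm]
    ring
  have hFa : F (2 * N + 2) = 0 := by
    have hm : meshT N (2 * N + 2) = 1 := by
      unfold meshT; push_cast; field_simp; ring
    have hr : relu (u - meshT N (2 * N + 2)) = 0 :=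
      max_eq_right (by rw [hm]; linarith)
    show (N : ℝ) * relu (u - meshT N (2 * N + 2)) = _
    rw [hr, mul_zero]
  have hFb : F (2 * N + 3) = 0 := by
    have hm : meshT N (2 * N + 3) = 1 + 1 / N := by
      unfold meshT; push_cast; field_simp; ring
    have hr : relu (u - meshT N (2 * N + 3)) = 0 :=
      max_eq_right (by rw [hm]; linarith)
    show (N : ℝ) * relu (u - meshT N (2 * N + 3)) = _
    rw [hr, mul_zero]
  have hGl : G (2 * N + 1) = 0 := by
    have e : 2 * N + 1 + 2 = 2 * N + 3 := by ring
    have e' : 2 * N + 1 + 1 = 2 * N + 2 := by ring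
    simp only [hG, e, e', hFa, hFb, sub_zero]
  have hG0 : G 0 = -1 := by
    simp only [hG]
    norm_num [hF1, hF2]
  rw [hGl, hG0]
  ring

theorem Lt_norm_le (N : ℕ) (hN : 1 ≤ N) (g : ℝ → ℝ)
    (hg : ContinuousOn g (Set.Icc (-1 : ℝ) 1)) :
    ∀ u ∈ Set.Icc (-1 : ℝ) 1,
      |Lt N g u| ≤ sSup ((fun v => |g v|) '' Set.Icc (-1 : ℝ) 1) := by
  intro u hu
  set M := sSup ((fun v => |g v|) '' Set.Icc (-1 : ℝ) 1) with hM
  have hbdd : BddAbove ((fun v => |g v|) '' Set.Icc (-1 : ℝ) 1) :=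
    isCompact_Icc.bddAbove_image hg.abs
  have hMle : ∀ v ∈ Set.Icc (-1 : ℝ) 1, |g v| ≤ M := fun v hv =>
    le_csSup hbdd ⟨v, hv, rfl⟩
  have hmesh : ∀ i ∈ Finset.Icc 2 (2 * N + 2), meshT N i ∈ Set.Icc (-1 : ℝ) 1 := by
    intro i hi
    rw [Finset.mem_Icc] at hi
    obtain ⟨h2, h3⟩ := hi
    have hN0 : (0 : ℝ) < N := by exact_mod_cast hN
    have hi2 : (2 : ℝ) ≤ (i : ℝ) := by exact_mod_cast h2
    have hi3 : (i : ℝ) ≤ 2 * N + 2 := by exact_mod_cast h3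
    constructor
    · unfold meshT
      have : (0 : ℝ) ≤ ((i : ℝ) - 2) / N := by
        apply div_nonneg (by linarith) hN0.le
      linarith
    · unfold meshT
      have : ((i : ℝ) - 2) / N ≤ 2 := by
        rw [div_le_iff₀ hN0]; linarith
      linarith
  calc |Lt N g u|
      ≤ ∑ i ∈ Finset.Icc 2 (2 * N + 2), |g (meshT N i)| * hatDelta N i u := by
        rw [Lt]
        refine (Finset.abs_sum_le_sum_abs _ _).trans ?_
        apply Finset.sum_le_sum
        intro i hi
        rw [Finset.mem_Icc] at hi
        rw [abs_mul, abs_of_nonneg (hatDelta_nonneg N i (by omega) u)]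
    _ ≤ ∑ i ∈ Finset.Icc 2 (2 * N + 2), M * hatDelta N i u := by
        apply Finset.sum_le_sum
        intro i hi
        have hi' := hi
        rw [Finset.mem_Icc] at hi'
        exact mul_le_mul_of_nonneg_right (hMle _ (hmesh i hi))
          (hatDelta_nonneg N i (by omega) u)
    _ = M := by
        rw [← Finset.mul_sum, sum_hatDelta N hN u hu, mul_one]
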